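/- For every topological space X, |X| ≤ nu(X)^{κ(X)·sL_θ(X)}. -/

import Mathlib

open Set Topology Cardinal

universe u

variable {X : Type u}

/-- The θ-closure of a set. -/
def thetaCl [TopologicalSpace X] (A : Set X) : Set X :=
  {x | ∀ U : Set X, IsOpen U → x ∈ U → (closure U ∩ A).Nonempty}

/-- The θ-closed hull of a set. -/
def thetaHull [TopologicalSpace X] (A : Set X) : Set X :=
  ⋂₀ {C : Set X | thetaCl C = C ∧ A ⊆ C}

/-- A nonempty set is finitely non-Urysohn if every finite choice of closed
neighborhoods (closures of open neighborhoods) of finitely many of its points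
has nonempty intersection. -/
def FinNonUrysohn [TopologicalSpace X] (A : Set X) : Prop :=
  A.Nonempty ∧ ∀ F : Set X, F ⊆ A → F.Nonempty → F.Finite →
    ∀ U : X → Set X, (∀ x ∈ F, IsOpen (U x) ∧ x ∈ U x) →
      (⋂ x ∈ F, closure (U x)).Nonempty

/-- The non-Urysohn number `nu(X)`. -/
noncomputable def nuNumber (X : Type u) [TopologicalSpace X] : Cardinal.{u} :=
  1 + ⨆ A : {A : Set X // FinNonUrysohn A}, #↥A.1

/-- The Urysohn number `U(X)`. -/
noncomputable def UrysohnNumber (X : Type u) [TopologicalSpace X] : Cardinal.{u} :=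
  sInf {κ : Cardinal.{u} | ∀ A : Set X, κ ≤ #↥A → ∃ U : X → Set X,
    (∀ a ∈ A, IsOpen (U a) ∧ a ∈ U a) ∧ (⋂ a ∈ A, closure (U a)) = ∅}

/-- The cardinal function `κ(X)`: the smallest infinite cardinal such that each
point has a family of at most that many closed neighborhoods cofinal (under
reverse inclusion) in the closures of its open neighborhoods. -/
noncomputable def kappaInv (X : Type u) [TopologicalSpace X] : Cardinal.{u} :=
  sInf {κ : Cardinal.{u} | ℵ₀ ≤ κ ∧ ∀ x : X, ∃ V : Set (Set X), #↥V ≤ κ ∧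
    (∀ W ∈ V, IsClosed W ∧ W ∈ nhds x) ∧
    ∀ U : Set X, IsOpen U → x ∈ U → ∃ W ∈ V, W ⊆ closure U}

/-- The character `χ(X)`. -/
noncomputable def chiChar (X : Type u) [TopologicalSpace X] : Cardinal.{u} :=
  sInf {κ : Cardinal.{u} | ℵ₀ ≤ κ ∧ ∀ x : X, ∃ B : Set (Set X), #↥B ≤ κ ∧
    (∀ U ∈ B, U ∈ nhds x) ∧ ∀ S ∈ nhds x, ∃ U ∈ B, U ⊆ S}

/-- The θ-density `d_θ(X)`. -/
noncomputable def dTheta (X : Type u) [TopologicalSpace X] : Cardinal.{u} :=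
  sInf {c : Cardinal.{u} | ∃ A : Set X, thetaCl A = Set.univ ∧ #↥A = c}

/-- The cardinal function `sL_θ(X)`. -/
noncomputable def sLtheta (X : Type u) [TopologicalSpace X] : Cardinal.{u} :=
  sInf {τ : Cardinal.{u} | ℵ₀ ≤ τ ∧ ∀ A : Set X, ∀ 𝒰 : Set (Set X),
    (∀ U ∈ 𝒰, IsOpen U) → thetaCl A ⊆ ⋃₀ 𝒰 →
    ∃ 𝒱 ⊆ 𝒰, #↥𝒱 ≤ τ ∧ A ⊆ closure (⋃₀ 𝒱)}

/-- The cardinal function `wL_c(X)`. -/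
noncomputable def wLc (X : Type u) [TopologicalSpace X] : Cardinal.{u} :=
  sInf {τ : Cardinal.{u} | ℵ₀ ≤ τ ∧ ∀ A : Set X, IsClosed A → ∀ 𝒰 : Set (Set X),
    (∀ U ∈ 𝒰, IsOpen U) → A ⊆ ⋃₀ 𝒰 →
    ∃ 𝒱 ⊆ 𝒰, #↥𝒱 ≤ τ ∧ A ⊆ closure (⋃₀ 𝒱)}

/-- The almost Lindelöf degree `aL(X)`. -/
noncomputable def aLdeg (X : Type u) [TopologicalSpace X] : Cardinal.{u} :=
  sInf {τ : Cardinal.{u} | ℵ₀ ≤ τ ∧ ∀ 𝒰 : Set (Set X),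
    (∀ U ∈ 𝒰, IsOpen U) → ⋃₀ 𝒰 = Set.univ →
    ∃ 𝒱 ⊆ 𝒰, #↥𝒱 ≤ τ ∧ (⋃ V ∈ 𝒱, closure V) = Set.univ}

/-- `X` is a Urysohn space: distinct points have open neighborhoods with
disjoint closures. -/
def UrysohnSpace (X : Type u) [TopologicalSpace X] : Prop :=
  ∀ x y : X, x ≠ y → ∃ U V : Set X, IsOpen U ∧ IsOpen V ∧ x ∈ U ∧ y ∈ V ∧
    closure U ∩ closure V = ∅

/-- For a set `S`, the intersection over all choices of closed neighborhoods of
the points of `S` of the θ-closures of the intersections of the choices. -/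
def capSet [TopologicalSpace X] (S : Set X) : Set X :=
  {y | ∀ U : X → Set X, (∀ a ∈ S, IsOpen (U a) ∧ a ∈ U a) →
    y ∈ thetaCl (⋂ a ∈ S, closure (U a))}

/-- For a set `M`, the intersection over all nonempty finite `F ⊆ M` and all
choices of open neighborhoods of points of `F` of
`cl_θ(⋂_{x∈F} closure (U x))`. -/
def fnuCap [TopologicalSpace X] (M : Set X) : Set X :=
  {y | ∀ F : Set X, F ⊆ M → F.Nonempty → F.Finite → ∀ U : X → Set X,
    (∀ x ∈ F, IsOpen (U x) ∧ x ∈ U x) →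
    y ∈ thetaCl (⋂ x ∈ F, closure (U x))}

section AuxStatement9

variable [TopologicalSpace X]


variable [TopologicalSpace X]

lemma aux_subset_thetaCl (A : Set X) : A ⊆ thetaCl A := fun x hx U _ hxU =>
  ⟨x, subset_closure hxU, hx⟩

lemma aux_thetaCl_mono {A B : Set X} (h : A ⊆ B) : thetaCl A ⊆ thetaCl B := by
  intro x hx U hU hxU
  obtain ⟨y, hy1, hy2⟩ := hx U hU hxU
  exact ⟨y, hy1, h hy2⟩

lemma aux_closedNbhd_meets {B : Set X} {z : X} (hz : z ∈ thetaCl B) {N : Set X}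
    (hNc : IsClosed N) (hN : N ∈ nhds z) : (N ∩ B).Nonempty := by
  obtain ⟨p, hp1, hp2⟩ := hz (interior N) isOpen_interior (mem_interior_iff_mem_nhds.2 hN)
  exact ⟨p, closure_minimal interior_subset hNc hp1, hp2⟩

lemma aux_bddAbove_fnu :
    BddAbove (Set.range fun A : {A : Set X // FinNonUrysohn A} => #↥A.1) := by
  refine ⟨#X, ?_⟩
  rintro c ⟨B, rfl⟩
  exact mk_set_le _

lemma aux_fnu_mk_le {A : Set X} (h : FinNonUrysohn A) : #↥A ≤ nuNumber X := by
  calc #↥A ≤ ⨆ A : {A : Set X // FinNonUrysohn A}, #↥A.1 :=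
        le_ciSup aux_bddAbove_fnu ⟨A, h⟩
    _ ≤ nuNumber X := self_le_add_left _ 1

/-- Key lemma: the θ-closure of a nonempty set `B` has cardinality at most
`#B ^ τ * nu(X)`, given a κ-type structure of closed-neighborhood families. -/
lemma aux_mk_thetaCl_le {τ : Cardinal.{u}} (hτ : ℵ₀ ≤ τ) (V : X → Set (Set X))
    (hVcard : ∀ x, #↥(V x) ≤ τ)
    (hVmem : ∀ x, ∀ W ∈ V x, IsClosed W ∧ W ∈ nhds x)
    (hVcof : ∀ x, ∀ U : Set X, IsOpen U → x ∈ U → ∃ W ∈ V x, W ⊆ closure U)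
    (B : Set X) :
    #↥(thetaCl B) ≤ #↥B ^ τ * nuNumber X := by
  classical
  set T := τ.out with hT
  haveI hTinf : Infinite T := by
    rw [Cardinal.infinite_iff, Cardinal.mk_out]
    exact hτ
  have hVne : ∀ x : X, (V x).Nonempty := by
    intro x
    obtain ⟨W, hW, -⟩ := hVcof x univ isOpen_univ (mem_univ x)
    exact ⟨W, hW⟩
  -- enumerations of the families `V x`
  have he : ∀ z : X, ∃ e : T → Set X, (∀ i, e i ∈ V z) ∧ ∀ W ∈ V z, ∃ i, e i = W := by
    intro z
    haveI : Nonempty ↥(V z) := (hVne z).to_subtype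
    have hle : #↥(V z) ≤ #T := by rw [Cardinal.mk_out]; exact hVcard z
    obtain ⟨f⟩ := (Cardinal.le_def _ _).1 hle
    refine ⟨fun i => ((Function.invFun f i : ↥(V z)) : Set X), fun i => (Function.invFun f i).2, ?_⟩
    intro W hW
    obtain ⟨i, hi⟩ := Function.invFun_surjective f.injective ⟨W, hW⟩
    exact ⟨i, congrArg Subtype.val hi⟩
  choose e he1 he2 using he
  -- for z in the θ-closure, finite intersections of the `e z i` meet `B`
  have hNB : ∀ z : ↥(thetaCl B), ∀ s : List T, ∃ p : X, p ∈ (⋂ i ∈ s, e (z : X) i) ∧ p ∈ B := by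
    intro z s
    have hcl : IsClosed (⋂ i ∈ s, e (z : X) i) :=
      isClosed_biInter fun i _ => (hVmem _ _ (he1 (z : X) i)).1
    have hnb : (⋂ i ∈ s, e (z : X) i) ∈ nhds (z : X) :=
      (Filter.biInter_mem (List.finite_toSet s)).2 fun i _ => (hVmem _ _ (he1 (z : X) i)).2
    obtain ⟨p, hp1, hp2⟩ := aux_closedNbhd_meets z.2 hcl hnb
    exact ⟨p, hp1, hp2⟩
  choose pt hptN hptB using hNB
  set gmap : ↥(thetaCl B) → (List T → ↥B) := fun z s => ⟨pt z s, hptB z s⟩ with hgmap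
  -- each fiber of `gmap` is finitely non-Urysohn, so has size at most nu(X)
  have hfiber : ∀ ψ : List T → ↥B, #{z : ↥(thetaCl B) // gmap z = ψ} ≤ nuNumber X := by
    intro ψ
    rcases isEmpty_or_nonempty {z : ↥(thetaCl B) // gmap z = ψ} with hE | hNE
    · rw [Cardinal.mk_eq_zero]
      exact zero_le
    · obtain ⟨z₀, hz₀⟩ := hNE
      set Fψ : Set X := {x | ∃ h : x ∈ thetaCl B, gmap ⟨x, h⟩ = ψ} with hFψ
      have hinj : #{z : ↥(thetaCl B) // gmap z = ψ} ≤ #↥Fψ := by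
        have hsurj : Function.Surjective (fun x : ↥Fψ =>
            (⟨⟨(x : X), x.2.choose⟩, x.2.choose_spec⟩ : {z : ↥(thetaCl B) // gmap z = ψ})) := by
          rintro ⟨⟨x, hθ⟩, hg⟩
          refine ⟨⟨x, hθ, hg⟩, ?_⟩
          apply Subtype.ext
          apply Subtype.ext
          rfl
        exact Cardinal.mk_le_of_surjective hsurj
      refine hinj.trans (aux_fnu_mk_le ?_)
      constructor
      · exact ⟨(z₀ : ↥(thetaCl B)).1, (z₀ : ↥(thetaCl B)).2, hz₀⟩
      intro F hFsub hFne hFfin U hU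
      -- choose for each x in F an index i such that e x i ⊆ closure (U x)
      have hWi : ∀ x : X, ∃ i : T, x ∈ F → e x i ⊆ closure (U x) := by
        intro x
        by_cases hx : x ∈ F
        · obtain ⟨hUo, hxU⟩ := hU x hx
          obtain ⟨W, hWV, hWsub⟩ := hVcof x (U x) hUo hxU
          obtain ⟨i, hi⟩ := he2 x W hWV
          exact ⟨i, fun _ => hi ▸ hWsub⟩
        · exact ⟨Classical.arbitrary T, fun hx' => absurd hx' hx⟩
      choose iSel hiSel using hWi
      set s : List T := hFfin.toFinset.toList.map iSel with hs
      obtain ⟨x₁, hx₁⟩ := hFne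
      obtain ⟨hθ₁, hg₁⟩ := hFsub hx₁
      refine ⟨pt ⟨x₁, hθ₁⟩ s, ?_⟩
      rw [mem_iInter₂]
      intro x hx
      obtain ⟨hθx, hgx⟩ := hFsub hx
      have hpteq : pt ⟨x₁, hθ₁⟩ s = pt ⟨x, hθx⟩ s := by
        have h12 := congrFun (hg₁.trans hgx.symm) s
        exact congrArg Subtype.val h12
      rw [hpteq]
      have hmem := hptN ⟨x, hθx⟩ s
      have hiins : iSel x ∈ s := by
        refine List.mem_map.2 ⟨x, ?_, rfl⟩
        rw [Finset.mem_toList, Set.Finite.mem_toFinset]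
        exact hx
      have hpe : pt ⟨x, hθx⟩ s ∈ e x (iSel x) := by
        have := mem_iInter₂.1 hmem (iSel x) hiins
        exact this
      exact hiSel x hx hpe
  -- counting
  calc #↥(thetaCl B) = #(Σ ψ : List T → ↥B, {z : ↥(thetaCl B) // gmap z = ψ}) :=
        (Cardinal.mk_congr (Equiv.sigmaFiberEquiv gmap)).symm
    _ = Cardinal.sum fun ψ : List T → ↥B => #{z : ↥(thetaCl B) // gmap z = ψ} :=
        Cardinal.mk_sigma _
    _ ≤ Cardinal.sum fun _ : List T → ↥B => nuNumber X := Cardinal.sum_le_sum _ _ hfiber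
    _ = #(List T → ↥B) * nuNumber X := Cardinal.sum_const' _ _
    _ = #↥B ^ τ * nuNumber X := by
        rw [← Cardinal.power_def, Cardinal.mk_list_eq_mk, Cardinal.mk_out]



variable [TopologicalSpace X]

/-- A family `φ` of prospective closed neighborhoods attached to points of `B`. -/
def auxGood (V : X → Set (Set X)) (τ : Cardinal.{u}) (B : Set X) (φ : τ.out → Set X) : Prop :=
  (∀ i, ∃ x ∈ B, φ i ∈ V x) ∧ closure (⋃ i, interior (φ i)) ≠ Set.univ

noncomputable def auxPick (x₀ : X) (τ : Cardinal.{u}) (φ : τ.out → Set X) : X :=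
  @Classical.epsilon X ⟨x₀⟩ fun z => z ∉ closure (⋃ i, interior (φ i))

noncomputable def auxStep (V : X → Set (Set X)) (x₀ : X) (τ : Cardinal.{u}) (B : Set X) :
    Set X :=
  thetaCl (B ∪ auxPick x₀ τ '' {φ | auxGood V τ B φ} ∪ {x₀})

noncomputable def auxChain (V : X → Set (Set X)) (x₀ : X) (τ : Cardinal.{u}) :
    Ordinal.{u} → Set X :=
  Ordinal.lt_wf.fix fun o rec => auxStep V x₀ τ (⋃ o' : Set.Iio o, rec o'.1 o'.2)

lemma auxChain_eq (V : X → Set (Set X)) (x₀ : X) (τ : Cardinal.{u}) (o : Ordinal.{u}) :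
    auxChain V x₀ τ o = auxStep V x₀ τ (⋃ o' : Set.Iio o, auxChain V x₀ τ o'.1) := by
  rw [auxChain, WellFounded.fix_eq]

lemma aux_subset_auxStep (V : X → Set (Set X)) (x₀ : X) (τ : Cardinal.{u}) (B : Set X) :
    B ⊆ auxStep V x₀ τ B :=
  (subset_union_left.trans subset_union_left).trans (aux_subset_thetaCl _)

lemma aux_x₀_mem_auxChain (V : X → Set (Set X)) (x₀ : X) (τ : Cardinal.{u}) (o : Ordinal.{u}) :
    x₀ ∈ auxChain V x₀ τ o := by
  rw [auxChain_eq]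
  exact aux_subset_thetaCl _ (Or.inr rfl)

lemma auxChain_mono (V : X → Set (Set X)) (x₀ : X) (τ : Cardinal.{u}) :
    Monotone (auxChain V x₀ τ) := by
  intro o o' h
  rcases eq_or_lt_of_le h with rfl | hlt
  · exact Set.Subset.refl _
  · calc auxChain V x₀ τ o ⊆ ⋃ o'' : Set.Iio o', auxChain V x₀ τ o''.1 :=
          subset_iUnion (fun o'' : Set.Iio o' => auxChain V x₀ τ o''.1) ⟨o, hlt⟩
      _ ⊆ auxChain V x₀ τ o' := by
          rw [auxChain_eq V x₀ τ o']
          exact aux_subset_auxStep _ _ _ _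

end AuxStatement9

theorem statement9 (X : Type u) [TopologicalSpace X] :
    #X ≤ nuNumber X ^ (kappaInv X * sLtheta X) := by
  classical
  rcases isEmpty_or_nonempty X with hX | hX
  · have h0 : #X = 0 := Cardinal.mk_eq_zero X
    rw [h0]
    exact zero_le
  obtain ⟨x₀⟩ := hX
  set ν := nuNumber X with hν
  set τ := kappaInv X * sLtheta X with hτdef
  -- the defining sets of kappaInv and sLtheta are nonempty, so the infima belong to them
  have hκset : kappaInv X ∈ {κ : Cardinal.{u} | ℵ₀ ≤ κ ∧ ∀ x : X, ∃ V : Set (Set X),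
      #↥V ≤ κ ∧ (∀ W ∈ V, IsClosed W ∧ W ∈ nhds x) ∧
      ∀ U : Set X, IsOpen U → x ∈ U → ∃ W ∈ V, W ⊆ closure U} := by
    apply csInf_mem
    refine ⟨max ℵ₀ #(Set X), le_max_left _ _, fun x => ?_⟩
    refine ⟨{C | ∃ U : Set X, IsOpen U ∧ x ∈ U ∧ C = closure U}, ?_, ?_, ?_⟩
    · exact (mk_set_le _).trans (le_max_right _ _)
    · rintro W ⟨U, hUo, hxU, rfl⟩
      exact ⟨isClosed_closure, Filter.mem_of_superset (hUo.mem_nhds hxU) subset_closure⟩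
    · intro U hUo hxU
      exact ⟨closure U, ⟨U, hUo, hxU, rfl⟩, subset_rfl⟩
  have hsLset : sLtheta X ∈ {τ' : Cardinal.{u} | ℵ₀ ≤ τ' ∧ ∀ A : Set X, ∀ 𝒰 : Set (Set X),
      (∀ U ∈ 𝒰, IsOpen U) → thetaCl A ⊆ ⋃₀ 𝒰 →
      ∃ 𝒱 ⊆ 𝒰, #↥𝒱 ≤ τ' ∧ A ⊆ closure (⋃₀ 𝒱)} := by
    apply csInf_mem
    refine ⟨max ℵ₀ #(Set X), le_max_left _ _, fun A 𝒰 hop hsub =>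
      ⟨𝒰, subset_rfl, (mk_set_le _).trans (le_max_right _ _),
        ((aux_subset_thetaCl A).trans hsub).trans subset_closure⟩⟩
  obtain ⟨hκinf, hκV⟩ := hκset
  obtain ⟨hsLinf, hsLprop⟩ := hsLset
  choose V hVcard0 hVmem hVcof using hκV
  -- basic cardinal arithmetic
  have hκle : kappaInv X ≤ τ := by
    calc kappaInv X = kappaInv X * 1 := (mul_one _).symm
      _ ≤ τ := mul_le_mul_right (one_lt_aleph0.le.trans hsLinf) _
  have hsLle : sLtheta X ≤ τ := by
    calc sLtheta X = 1 * sLtheta X := (one_mul _).symm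
      _ ≤ τ := mul_le_mul_left (one_lt_aleph0.le.trans hκinf) _
  have hτinf : ℵ₀ ≤ τ := hκinf.trans hκle
  have hVcard : ∀ x, #↥(V x) ≤ τ := fun x => (hVcard0 x).trans hκle
  -- nu(X) is at least 2
  have hsingle : FinNonUrysohn ({x₀} : Set X) := by
    refine ⟨⟨x₀, rfl⟩, ?_⟩
    intro F hFsub hFne hFfin U hU
    have hForced : F = {x₀} := (subset_singleton_iff_eq.1 hFsub).resolve_left hFne.ne_empty
    subst hForced
    refine ⟨x₀, ?_⟩
    rw [mem_iInter₂]
    intro x hx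
    rw [mem_singleton_iff] at hx
    rw [hx]
    exact subset_closure (hU x₀ rfl).2
  have hν2 : (2 : Cardinal) ≤ ν := by
    have h1 : (1 : Cardinal) ≤ ⨆ A : {A : Set X // FinNonUrysohn A}, #↥A.1 := by
      have hle := le_ciSup (aux_bddAbove_fnu (X := X)) ⟨({x₀} : Set X), hsingle⟩
      rwa [Cardinal.mk_singleton] at hle
    calc (2 : Cardinal) = 1 + 1 := one_add_one_eq_two.symm
      _ ≤ 1 + ⨆ A : {A : Set X // FinNonUrysohn A}, #↥A.1 := add_le_add_right h1 1
      _ = ν := rfl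
  have hν0 : ν ≠ 0 := (lt_of_lt_of_le two_pos hν2).ne'
  set lam := ν ^ τ with hlam
  have h2τ : (2 : Cardinal) ^ τ ≤ lam := power_le_power_right hν2
  have hτlam : τ ≤ lam := (cantor τ).le.trans h2τ
  have hlaminf : ℵ₀ ≤ lam := hτinf.trans hτlam
  have hνlam : ν ≤ lam := by
    calc ν = ν ^ (1 : Cardinal) := (power_one ν).symm
      _ ≤ ν ^ τ := power_le_power_left hν0 (one_lt_aleph0.le.trans hτinf)
  have hlamlam : lam * lam = lam := mul_eq_self hlaminf
  have hlampow : lam ^ τ = lam := by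
    rw [hlam, ← power_mul, mul_eq_self hτinf]
  have haddlam : ∀ a b : Cardinal, a ≤ lam → b ≤ lam → a + b ≤ lam := fun a b h1 h2 =>
    (add_le_add h1 h2).trans (add_eq_self hlaminf).le
  have hmullam : ∀ a b : Cardinal, a ≤ lam → b ≤ lam → a * b ≤ lam := fun a b h1 h2 =>
    (mul_le_mul' h1 h2).trans hlamlam.le
  set κs := Order.succ τ with hκs
  have hκsreg : (Order.succ τ).IsRegular := isRegular_succ hτinf
  have hκslam : κs ≤ lam := Order.succ_le_of_lt ((cantor τ).trans_le h2τ)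
  have hκsinf : ℵ₀ ≤ κs := hτinf.trans (Order.le_succ τ)
  set o₁ := κs.ord with ho₁
  have ho₁lim : Order.IsSuccLimit o₁ := Cardinal.isSuccLimit_ord hκsinf
  -- the stage-bounding helper
  have hstage : ∀ {ι : Type u} (f : ι → Ordinal.{u}), #ι ≤ τ → (∀ i, f i < o₁) →
      ∃ o' < o₁, ∀ i, f i < o' := by
    intro ι f hι hf
    refine ⟨⨆ i, Order.succ (f i), ?_, ?_⟩
    · exact Cardinal.iSup_lt_ord_of_isRegular hκsreg (Order.lt_succ_of_le hι)
        fun i => ho₁lim.succ_lt (hf i)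
    · intro i
      exact (Order.lt_succ_of_le le_rfl).trans_le (Ordinal.le_iSup _ i)
  set D := auxChain V x₀ τ with hD
  -- cardinality bound for unions along the chain
  have hUnionCard : ∀ o : Ordinal.{u}, o ≤ o₁ → (∀ o' < o, #↥(D o') ≤ lam) →
      #↥(⋃ o' : Set.Iio o, D o'.1) ≤ lam := by
    intro o ho hIH
    have hre : (⋃ o' : Set.Iio o, D o'.1)
        = ⋃ j : o.ToType, D ((Ordinal.ToType.mk (o := o)).symm j).1 := by
      ext p
      simp only [mem_iUnion]
      constructor
      · rintro ⟨o', hp⟩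
        refine ⟨Ordinal.ToType.mk (o := o) o', ?_⟩
        simpa using hp
      · rintro ⟨j, hp⟩
        exact ⟨_, hp⟩
    rw [hre]
    refine (Cardinal.mk_iUnion_le _).trans (hmullam _ _ ?_ ?_)
    · rw [Cardinal.mk_toType]
      exact (Ordinal.card_le_card ho).trans (by rw [ho₁, Cardinal.card_ord]; exact hκslam)
    · rcases isEmpty_or_nonempty o.ToType with hE | hNE
      · rw [ciSup_of_empty]
        exact zero_le
      · exact ciSup_le fun j => hIH _ ((Ordinal.ToType.mk (o := o)).symm j).2
  -- cardinality of each stage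
  have hcard : ∀ o : Ordinal.{u}, o ≤ o₁ → #↥(D o) ≤ lam := by
    intro o
    induction o using Ordinal.induction with
    | h o IH =>
      intro ho
      rw [hD, auxChain_eq]
      set B : Set X := ⋃ o' : Set.Iio o, auxChain V x₀ τ o'.1 with hB
      have hBcard : #↥B ≤ lam := hUnionCard o ho fun o' h' => IH o' h' (h'.le.trans ho)
      -- bound the picked points
      have hpoolcard : #↥(⋃ x ∈ B, V x) ≤ lam := by
        refine (mk_biUnion_le _ _).trans (hmullam _ _ hBcard ?_)
        rcases isEmpty_or_nonempty ↥B with hE | hNE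
        · rw [ciSup_of_empty]
          exact zero_le
        · exact ciSup_le fun x => (hVcard _).trans hτlam
      have hgoodcard : #↥{φ : τ.out → Set X | auxGood V τ B φ} ≤ lam := by
        have hinj : Function.Injective
            (fun φ : ↥{φ : τ.out → Set X | auxGood V τ B φ} =>
              (fun i => (⟨(φ : τ.out → Set X) i, by
                obtain ⟨x, hx, hmem⟩ := φ.2.1 i
                exact mem_biUnion hx hmem⟩ : ↥(⋃ x ∈ B, V x))
                : τ.out → ↥(⋃ x ∈ B, V x))) := by
          intro a b hab
          apply Subtype.ext
          funext i
          exact congrArg Subtype.val (congrFun hab i)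
        refine (Cardinal.mk_le_of_injective hinj).trans ?_
        have : #(τ.out → ↥(⋃ x ∈ B, V x)) = #↥(⋃ x ∈ B, V x) ^ τ := by
          rw [← Cardinal.power_def, Cardinal.mk_out]
        rw [this]
        calc #↥(⋃ x ∈ B, V x) ^ τ ≤ lam ^ τ := power_le_power_right hpoolcard
          _ = lam := hlampow
      have hpickcard : #↥(auxPick x₀ τ '' {φ | auxGood V τ B φ}) ≤ lam :=
        mk_image_le.trans hgoodcard
      have hucard : #↥(B ∪ auxPick x₀ τ '' {φ | auxGood V τ B φ} ∪ {x₀}) ≤ lam := by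
        refine (mk_union_le _ _).trans (haddlam _ _ ((mk_union_le _ _).trans
          (haddlam _ _ hBcard hpickcard)) ?_)
        rw [Cardinal.mk_singleton]
        exact one_lt_aleph0.le.trans hlaminf
      calc #↥(auxStep V x₀ τ B) ≤ #↥(B ∪ auxPick x₀ τ '' {φ | auxGood V τ B φ} ∪ {x₀}) ^ τ * ν :=
            aux_mk_thetaCl_le hτinf V hVcard hVmem hVcof _
        _ ≤ lam ^ τ * ν := mul_le_mul' (power_le_power_right hucard) le_rfl
        _ = lam ^ τ * ν := rfl
        _ = lam * ν := by rw [hlampow]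
        _ ≤ lam := hmullam _ _ le_rfl hνlam
  set Dstar : Set X := ⋃ o' : Set.Iio o₁, D o'.1 with hDstar
  have hDsub : ∀ o', o' < o₁ → D o' ⊆ Dstar := fun o' h =>
    subset_iUnion (fun o'' : Set.Iio o₁ => D o''.1) ⟨o', h⟩
  have hx₀D : x₀ ∈ Dstar := hDsub 0 ho₁lim.pos (aux_x₀_mem_auxChain V x₀ τ 0)
  -- Dstar is θ-closed
  have hθclosed : thetaCl Dstar ⊆ Dstar := by
    intro z hz
    have hmeet : ∀ W : ↥(V z), ∃ o' : Ordinal.{u}, o' < o₁ ∧ ((W : Set X) ∩ D o').Nonempty := by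
      rintro ⟨W, hW⟩
      obtain ⟨p, hpW, hpD⟩ := aux_closedNbhd_meets hz (hVmem z W hW).1 (hVmem z W hW).2
      obtain ⟨⟨o', ho'⟩, hpo⟩ := mem_iUnion.1 hpD
      exact ⟨o', ho', p, hpW, hpo⟩
    choose oW hoW hneW using hmeet
    obtain ⟨oz, hozlt, hoz⟩ := hstage oW (hVcard z) hoW
    have hzθ : z ∈ thetaCl (D oz) := by
      intro U hU hzU
      obtain ⟨W, hWV, hWsub⟩ := hVcof z U hU hzU
      obtain ⟨p, hpW, hpD⟩ := hneW ⟨W, hWV⟩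
      exact ⟨p, hWsub hpW, auxChain_mono V x₀ τ (hoz ⟨W, hWV⟩).le hpD⟩
    have hsuccD : z ∈ D (Order.succ oz) := by
      rw [hD, auxChain_eq]
      refine aux_thetaCl_mono ?_ hzθ
      refine subset_union_left.trans' (subset_union_left.trans' ?_)
      exact subset_iUnion (fun o'' : Set.Iio (Order.succ oz) => auxChain V x₀ τ o''.1)
        ⟨oz, mem_Iio.2 (Order.lt_succ_of_le le_rfl)⟩
    exact hDsub _ (ho₁lim.succ_lt hozlt) hsuccD
  -- Dstar is all of X
  have huniv : Dstar = Set.univ := by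
    by_contra hne
    obtain ⟨q, hq⟩ := (ne_univ_iff_exists_notMem _).1 hne
    have hqθ : q ∉ thetaCl Dstar := fun h' => hq (hθclosed h')
    have hO₀ : ∃ O : Set X, IsOpen O ∧ q ∈ O ∧ closure O ∩ Dstar = ∅ := by
      by_contra h'
      push_neg at h'
      exact hqθ fun U hU hqU => h' U hU hqU
    obtain ⟨O₀, hO₀o, hqO₀, hO₀D⟩ := hO₀
    set V₀ : Set X := (closure O₀)ᶜ with hV₀
    have hV₀o : IsOpen V₀ := isClosed_closure.isOpen_compl
    have hDV₀ : Dstar ⊆ V₀ := by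
      intro p hp
      intro hpc
      exact absurd hO₀D (Set.Nonempty.ne_empty ⟨p, hpc, hp⟩)
    have hqV₀ : q ∉ closure V₀ := by
      intro hqcl
      obtain ⟨p, hpO, hpV⟩ := mem_closure_iff.1 hqcl O₀ hO₀o hqO₀
      exact hpV (subset_closure hpO)
    -- select small closed neighborhoods inside `closure V₀`
    have hWsel0 : ∀ p : X, ∃ W : Set X, p ∈ Dstar →
        W ∈ V p ∧ W ⊆ closure V₀ ∧ p ∈ interior W := by
      intro p
      by_cases hp : p ∈ Dstar
      · obtain ⟨W, hWV, hWsub⟩ := hVcof p V₀ hV₀o (hDV₀ hp)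
        exact ⟨W, fun _ => ⟨hWV, hWsub, mem_interior_iff_mem_nhds.2 (hVmem p W hWV).2⟩⟩
      · exact ⟨∅, fun hp' => absurd hp' hp⟩
    choose Wsel hWselP using hWsel0
    set 𝒰 : Set (Set X) := {U | ∃ p ∈ Dstar, U = interior (Wsel p)} with h𝒰
    have hcover : thetaCl Dstar ⊆ ⋃₀ 𝒰 := by
      intro p hp
      have hpD := hθclosed hp
      exact ⟨interior (Wsel p), ⟨p, hpD, rfl⟩, (hWselP p hpD).2.2⟩
    obtain ⟨𝒱, h𝒱sub, h𝒱card, h𝒱cl⟩ := hsLprop Dstar 𝒰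
      (by rintro U ⟨p, -, rfl⟩; exact isOpen_interior) hcover
    have hsubV₀ : ⋃₀ 𝒱 ⊆ closure V₀ := by
      rintro p ⟨u, hu𝒱, hpu⟩
      obtain ⟨x, hxD, rfl⟩ := h𝒱sub hu𝒱
      exact (hWselP x hxD).2.1 (interior_subset hpu)
    have hneuniv : closure (⋃₀ 𝒱) ≠ Set.univ := by
      intro heq
      have hqcl : q ∈ closure (⋃₀ 𝒱) := heq ▸ Set.mem_univ q
      exact hqV₀ (closure_minimal hsubV₀ isClosed_closure hqcl)
    rcases eq_empty_or_nonempty 𝒱 with rfl | h𝒱ne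
    · have := h𝒱cl hx₀D
      rw [sUnion_empty, closure_empty] at this
      exact this
    haveI : Nonempty ↥𝒱 := h𝒱ne.to_subtype
    have hcard' : #↥𝒱 ≤ #τ.out := by
      rw [Cardinal.mk_out]
      exact h𝒱card.trans hsLle
    obtain ⟨femb⟩ := (Cardinal.le_def _ _).1 hcard'
    set ψs : τ.out → ↥𝒱 := Function.invFun femb with hψs
    have hψsurj : Function.Surjective ψs := Function.invFun_surjective femb.injective
    have hxu0 : ∀ u : ↥𝒱, ∃ x, x ∈ Dstar ∧ (u : Set X) = interior (Wsel x) := by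
      rintro ⟨u, hu⟩
      obtain ⟨x, hx, hxe⟩ := h𝒱sub hu
      exact ⟨x, hx, hxe⟩
    choose xu hxuD hxueq using hxu0
    set φ : τ.out → Set X := fun i => Wsel (xu (ψs i)) with hφ
    have hφU : (⋃ i, interior (φ i)) = ⋃₀ 𝒱 := by
      ext p
      simp only [mem_iUnion, mem_sUnion]
      constructor
      · rintro ⟨i, hp⟩
        exact ⟨(ψs i : Set X), (ψs i).2, (hxueq (ψs i)) ▸ hp⟩
      · rintro ⟨u, hu, hp⟩
        obtain ⟨i, hi⟩ := hψsurj ⟨u, hu⟩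
        refine ⟨i, ?_⟩
        have : (u : Set X) = interior (Wsel (xu (ψs i))) := by
          rw [hi]
          exact hxueq ⟨u, hu⟩
        rw [hφ]
        rw [← this]
        exact hp
      -- stages of the points xu
    have hst : ∀ u : ↥𝒱, ∃ o' : Ordinal.{u}, o' < o₁ ∧ xu u ∈ D o' := by
      intro u
      obtain ⟨⟨o', ho'⟩, h⟩ := mem_iUnion.1 (hxuD u)
      exact ⟨o', ho', h⟩
    choose ou hou hxuo using hst
    obtain ⟨os, hoslt, hos⟩ := hstage ou (h𝒱card.trans hsLle) hou
    have hgood : auxGood V τ (⋃ o' : Set.Iio os, auxChain V x₀ τ o'.1) φ := by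
      constructor
      · intro i
        refine ⟨xu (ψs i), ?_, (hWselP _ (hxuD _)).1⟩
        exact mem_iUnion.2 ⟨⟨ou (ψs i), hos _⟩, hxuo _⟩
      · rw [hφU]
        exact hneuniv
    have hpk : auxPick x₀ τ φ ∈ D os := by
      rw [hD, auxChain_eq]
      apply aux_subset_thetaCl
      exact Or.inl (Or.inr ⟨φ, hgood, rfl⟩)
    have hpkD : auxPick x₀ τ φ ∈ Dstar := hDsub os hoslt hpk
    have hex : ∃ z : X, z ∉ closure (⋃ i, interior (φ i)) := by
      rw [hφU]
      obtain ⟨z, hz⟩ := (ne_univ_iff_exists_notMem _).1 hneuniv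
      exact ⟨z, hz⟩
    have hspec : auxPick x₀ τ φ ∉ closure (⋃ i, interior (φ i)) :=
      Classical.epsilon_spec_aux (⟨x₀⟩ : Nonempty X)
        (fun z => z ∉ closure (⋃ i, interior (φ i))) hex
    have hmem2 : auxPick x₀ τ φ ∈ closure (⋃ i, interior (φ i)) := by
      rw [hφU]
      exact h𝒱cl hpkD
    exact hspec hmem2
  -- conclude
  have hXcard : #X = #↥Dstar := by rw [huniv, Cardinal.mk_univ]
  rw [hXcard]
  exact hUnionCard o₁ le_rfl fun o' h' => hcard o' h'.le
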